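/- Let a, b > 0 with a > b and let k : ℝ → (0,1) be the solution of the soliton ODE determined implicitly by x + const = −log(1−k) + ((a−b)/a)·log(a/(a−b) − k) + (b/a)·log k. Then 1 − k(x) = C·e^(−x) + o(e^(−x)) as x → +∞ for some constant C > 0. -/
import Mathlib


open Filter Asymptotics

theorem stmt_12 (a b : ℝ) (hb : 0 < b) (hab : b < a)
    (F : ℝ → ℝ)
    (hF : ∀ k, F k = -Real.log (1 - k) + ((a - b) / a) * Real.log (a / (a - b) - k)
        + (b / a) * Real.log k)
    (k : ℝ → ℝ) (hk : ∀ x, k x ∈ Set.Ioo (0:ℝ) 1)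
    (c₀ : ℝ) (himp : ∀ x, x + c₀ = F (k x)) :
    ∃ C : ℝ, 0 < C ∧
      (fun x => (1 - k x) - C * Real.exp (-x)) =o[atTop] (fun x => Real.exp (-x)) := by
  have ha : 0 < a := hb.trans hab
  have hab' : 0 < a - b := sub_pos.mpr hab
  set s := a / (a - b) with hs
  have hs1 : 1 < s := (one_lt_div hab').mpr (by linarith)
  have hk1 : ∀ x, k x < 1 := fun x => (hk x).2
  have hk0 : ∀ x, 0 < k x := fun x => (hk x).1
  have hcab : 0 ≤ (a - b) / a := by positivity
  have hcba : 0 ≤ b / a := by positivity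
  -- k tends to 1
  have htend : Tendsto k atTop (nhds 1) := by
    rw [Metric.tendsto_atTop]
    intro ε hε
    set ε' := min ε 1 with hε'
    have hε'0 : 0 < ε' := lt_min hε one_pos
    refine ⟨(-Real.log ε' + ((a - b) / a) * Real.log s) - c₀ + 1, fun x hx => ?_⟩
    have h1 : 1 - ε' < k x := by
      by_contra h
      push_neg at h
      have h2 : ε' ≤ 1 - k x := by linarith
      have hlog1 : Real.log ε' ≤ Real.log (1 - k x) := Real.log_le_log hε'0 h2
      have hlog2 : Real.log (s - k x) ≤ Real.log s :=
        Real.log_le_log (by nlinarith [hk1 x]) (by linarith [hk0 x])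
      have hlog2' : ((a - b) / a) * Real.log (s - k x) ≤ ((a - b) / a) * Real.log s :=
        mul_le_mul_of_nonneg_left hlog2 hcab
      have hlog3 : Real.log (k x) ≤ 0 := Real.log_nonpos (hk0 x).le (hk1 x).le
      have hlog3' : (b / a) * Real.log (k x) ≤ 0 :=
        mul_nonpos_of_nonneg_of_nonpos hcba hlog3
      have h4 := himp x
      rw [hF] at h4
      linarith
    have h5 : 1 - k x < ε' := by linarith
    have : dist (k x) 1 = 1 - k x := by
      rw [Real.dist_eq, abs_of_neg (by linarith [hk1 x])]; ring
    rw [this]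
    exact h5.trans_le (min_le_left _ _)
  set G : ℝ → ℝ :=
    fun t => Real.exp (-c₀ + ((a - b) / a) * Real.log (s - t) + (b / a) * Real.log t) with hG
  have hid : ∀ x, 1 - k x = Real.exp (-x) * G (k x) := by
    intro x
    have h1 : (0:ℝ) < 1 - k x := by linarith [hk1 x]
    have h2 := himp x
    rw [hF] at h2
    have h3 : Real.log (1 - k x)
        = -x + (-c₀ + ((a - b) / a) * Real.log (s - k x) + (b / a) * Real.log (k x)) := by
      linarith
    calc 1 - k x = Real.exp (Real.log (1 - k x)) := (Real.exp_log h1).symm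
      _ = Real.exp (-x) * G (k x) := by rw [h3, Real.exp_add]
  refine ⟨G 1, Real.exp_pos _, ?_⟩
  have hGtend : Tendsto (fun x => G (k x)) atTop (nhds (G 1)) := by
    have hcont : ContinuousAt G 1 := by
      apply Real.continuous_exp.continuousAt.comp
      apply ContinuousAt.add
      apply ContinuousAt.add continuousAt_const
      · exact continuousAt_const.mul
          ((Real.continuousAt_log (by intro h; nlinarith)).comp
            (continuousAt_const.sub continuousAt_id))
      · exact continuousAt_const.mul (Real.continuousAt_log one_ne_zero)
    exact hcont.tendsto.comp htend
  have h0 : Tendsto (fun x => G (k x) - G 1) atTop (nhds 0) := by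
    simpa using hGtend.sub_const (G 1)
  have hlo := ((isLittleO_one_iff ℝ).mpr h0).mul_isBigO
    (isBigO_refl (fun x => Real.exp (-x)) atTop)
  simp only [one_mul] at hlo
  refine hlo.congr' (Eventually.of_forall fun x => ?_) EventuallyEq.rfl
  show (G (k x) - G 1) * Real.exp (-x) = 1 - k x - G 1 * Real.exp (-x)
  rw [hid x]; ring
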